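/- There exist two central hyperplane arrangements 𝒜₁ and 𝒜₂ in ℂ³ with the same underlying matroid (same collection of dependent sets of defining linear forms) such that the degree-1 components of their inverse systems C_{𝒜₁,−ρ} and C_{𝒜₂,−ρ} have different dimensions (1 versus 0). Concretely, for m ≥ 3, take 3m planes: m generic planes through each of three lines L₁, L₂, L₃; if the Lᵢ are coplanar then dim(C_{𝒜,−2m})₁ = 1, and if not then dim(C_{𝒜,−2m})₁ = 0. -/

import Mathlib

open MvPolynomial

/-- The directional derivative ∂_h on polynomials on ℂᵈ. -/
noncomputable def dirDeriv {d : ℕ} (h : Fin d → ℂ) :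
    Module.End ℂ (MvPolynomial (Fin d) ℂ) :=
  ∑ i, h i • (pderiv i).toLinearMap

open Classical in
/-- ρ_𝒜(h): the number of hyperplanes of the arrangement not containing `h`. -/
noncomputable def rhoA {d n : ℕ} (L : Fin n → ((Fin d → ℂ) →ₗ[ℂ] ℂ)) (h : Fin d → ℂ) : ℕ :=
  (Finset.univ.filter fun i => L i h ≠ 0).card

/-- The degree-1 graded component of the inverse system C_{𝒜,k}:
homogeneous polynomials f of degree 1 with (∂_h)^{ρ_𝒜(h)+k+1} f = 0 for all h ≠ 0. -/
noncomputable def Cdeg1 {d n : ℕ} (L : Fin n → ((Fin d → ℂ) →ₗ[ℂ] ℂ)) (k : ℤ) :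
    Submodule ℂ (MvPolynomial (Fin d) ℂ) :=
  (homogeneousSubmodule (Fin d) ℂ 1) ⊓
    ⨅ (h : Fin d → ℂ) (_ : h ≠ 0),
      LinearMap.ker (dirDeriv h ^ (((rhoA L h : ℤ) + k + 1).toNat))

/-! ### Auxiliary setup: two explicit arrangements of 12 planes in ℂ³ -/

/-- First arrangement: 4 planes through each of the three coplanar lines
spanned by `(1,0,0)`, `(0,1,0)`, `(1,1,0)`. -/
def W1 : Fin 12 → Fin 3 → ℤ :=
  ![![0,1,1],![0,1,2],![0,1,3],![0,1,4],
    ![1,0,100],![1,0,200],![1,0,300],![1,0,400],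
    ![1,-1,1],![1,-1,2],![1,-1,3],![1,-1,4]]

/-- Second arrangement: 4 planes through each of the three non-coplanar lines
spanned by `(1,0,0)`, `(0,1,0)`, `(0,0,1)`. -/
def W2 : Fin 12 → Fin 3 → ℤ :=
  ![![0,1,1],![0,1,2],![0,1,3],![0,1,4],
    ![1,0,100],![1,0,200],![1,0,300],![1,0,400],
    ![1,1,0],![1,2,0],![1,3,0],![1,4,0]]

def detZ (W : Fin 12 → Fin 3 → ℤ) (i j k : Fin 12) : ℤ :=
  W i 0 * (W j 1 * W k 2 - W j 2 * W k 1) -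
  W i 1 * (W j 0 * W k 2 - W j 2 * W k 0) +
  W i 2 * (W j 0 * W k 1 - W j 1 * W k 0)

/-- `sg i j k` : indices `i j k` index planes through a common line (same group). -/
def sg (i j k : Fin 12) : Prop := (i:ℕ)/4 = (j:ℕ)/4 ∧ (j:ℕ)/4 = (k:ℕ)/4

instance (i j k : Fin 12) : Decidable (sg i j k) := by unfold sg; infer_instance

lemma hdet1 : ∀ i j k : Fin 12, i ≠ j → i ≠ k → j ≠ k →
    (detZ W1 i j k = 0 ↔ sg i j k) := by decide

lemma hdet2 : ∀ i j k : Fin 12, i ≠ j → i ≠ k → j ≠ k →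
    (detZ W2 i j k = 0 ↔ sg i j k) := by decide

lemma hpair1 : ∀ i j : Fin 12, i ≠ j → (i:ℕ)/4 = (j:ℕ)/4 →
    W1 i 0 = W1 j 0 ∧ W1 i 1 = W1 j 1 ∧ W1 i 2 ≠ W1 j 2 := by decide

lemma hext1 : ∀ x : Fin 12, ∃ b c : Fin 12, x ≠ b ∧ x ≠ c ∧ b ≠ c ∧ ¬ sg x b c := by decide

lemma hext2 : ∀ x y : Fin 12, x ≠ y → ∃ c : Fin 12, x ≠ c ∧ y ≠ c ∧ ¬ sg x y c := by decide

/-! ### Linear forms from integer row vectors -/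

open Matrix in
noncomputable def lfun : (Fin 3 → ℂ) →ₗ[ℂ] ((Fin 3 → ℂ) →ₗ[ℂ] ℂ) :=
  LinearMap.mk₂ ℂ (fun v h => v ⬝ᵥ h)
    (fun _ _ _ => add_dotProduct _ _ _)
    (fun _ _ _ => smul_dotProduct _ _ _)
    (fun _ _ _ => dotProduct_add _ _ _)
    (fun _ _ _ => dotProduct_smul _ _ _)

@[simp] lemma lfun_apply (v h : Fin 3 → ℂ) : lfun v h = ∑ j, v j * h j := rfl

lemma lfun_ker : LinearMap.ker lfun = ⊥ := by
  rw [LinearMap.ker_eq_bot']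
  intro v hv
  funext j
  have := LinearMap.congr_fun hv (Pi.single j 1)
  rw [lfun_apply] at this
  simpa [Pi.single_apply, mul_ite] using this

def castW (W : Fin 12 → Fin 3 → ℤ) (i : Fin 12) : Fin 3 → ℂ := fun j => ((W i j : ℤ) : ℂ)

noncomputable def LA (W : Fin 12 → Fin 3 → ℤ) : Fin 12 → ((Fin 3 → ℂ) →ₗ[ℂ] ℂ) :=
  fun i => lfun (castW W i)

def sing (c : Fin 3) : Fin 3 → ℂ := fun t => if t = c then 1 else 0

lemma lfun_sing (v : Fin 3 → ℂ) (c : Fin 3) : lfun v (sing c) = v c := by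
  rw [lfun_apply]
  simp [sing, mul_ite]

lemma sing_ne_zero (c : Fin 3) : sing c ≠ 0 := by
  intro he
  have := congrFun he c
  simp [sing] at this

lemma det_cast (W : Fin 12 → Fin 3 → ℤ) (i j k : Fin 12) :
    (Matrix.of ![castW W i, castW W j, castW W k]).det = ((detZ W i j k : ℤ) : ℂ) := by
  rw [Matrix.det_fin_three]
  simp [castW, detZ, Matrix.cons_val_succ, show (2:Fin 3) = ⟨2, by norm_num⟩ from rfl]
  ring

lemma idet (W : Fin 12 → Fin 3 → ℤ) (i j k : Fin 12) :
    LinearIndependent ℂ ![castW W i, castW W j, castW W k] ↔ detZ W i j k ≠ 0 := by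
  have : LinearIndependent ℂ ![castW W i, castW W j, castW W k]
      ↔ LinearIndependent ℂ (Matrix.of ![castW W i, castW W j, castW W k]).row :=
    Iff.rfl
  rw [this, Matrix.linearIndependent_rows_iff_isUnit, Matrix.isUnit_iff_isUnit_det,
    isUnit_iff_ne_zero, det_cast]
  exact_mod_cast Iff.rfl

lemma mulvec_zero (W : Fin 12 → Fin 3 → ℤ) (i j k : Fin 12) (h : Fin 3 → ℂ)
    (hd : detZ W i j k ≠ 0)
    (h1 : ∑ t, castW W i t * h t = 0) (h2 : ∑ t, castW W j t * h t = 0)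
    (h3 : ∑ t, castW W k t * h t = 0) : h = 0 := by
  have hu : IsUnit (Matrix.of ![castW W i, castW W j, castW W k]) := by
    rw [Matrix.isUnit_iff_isUnit_det, det_cast, isUnit_iff_ne_zero]
    exact_mod_cast hd
  have hinj := Matrix.mulVec_injective_iff_isUnit.2 hu
  apply hinj
  rw [Matrix.mulVec_zero]
  funext r
  fin_cases r <;> simpa [Matrix.mulVec, dotProduct] using (by assumption)

/-! ### Matroid characterisation -/

section char
variable (v : Fin 12 → (Fin 3 → ℂ))
  (hdet : ∀ i j k : Fin 12, i ≠ j → i ≠ k → j ≠ k →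
    (LinearIndependent ℂ ![v i, v j, v k] ↔ ¬ sg i j k))

include hdet in
lemma char (s : Set (Fin 12)) :
    LinearIndependent ℂ (fun i : s => v i) ↔
      (s.ncard ≤ 3 ∧ ∀ i ∈ s, ∀ j ∈ s, ∀ k ∈ s, i ≠ j → i ≠ k → j ≠ k → ¬ sg i j k) := by
  constructor
  · intro hind
    have hfin : s.Finite := s.toFinite
    haveI := hfin.fintype
    constructor
    · have hcard := hind.fintype_card_le_finrank
      rw [Module.finrank_fin_fun] at hcard
      rwa [Set.ncard_eq_toFinset_card', Set.toFinset_card]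
    · intro i hi j hj k hk hij hik hjk
      rw [← hdet i j k hij hik hjk]
      have hf : Function.Injective (![⟨i, hi⟩, ⟨j, hj⟩, ⟨k, hk⟩] : Fin 3 → s) := by
        intro a b hab
        have hval := congrArg Subtype.val hab
        fin_cases a <;> fin_cases b <;> simp_all
      have := hind.comp _ hf
      have heq : (fun x : s => v x) ∘ (![⟨i, hi⟩, ⟨j, hj⟩, ⟨k, hk⟩] : Fin 3 → s)
          = ![v i, v j, v k] := by
        funext a; fin_cases a <;> rfl
      rwa [heq] at this
  · rintro ⟨hcard, htri⟩
    obtain ⟨a, b, c, hab, hac, hbc, hsub, hgood⟩ :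
        ∃ a b c : Fin 12, a ≠ b ∧ a ≠ c ∧ b ≠ c ∧ s ⊆ {a, b, c} ∧ ¬ sg a b c := by
      have hfin : s.Finite := s.toFinite
      interval_cases hn : s.ncard
      · rw [Set.ncard_eq_zero hfin] at hn
        exact ⟨0, 1, 4, by decide, by decide, by decide, by simp [hn], by decide⟩
      · rw [Set.ncard_eq_one] at hn
        obtain ⟨x, rfl⟩ := hn
        obtain ⟨b, c, hb, hc, hbc, hg⟩ := hext1 x
        exact ⟨x, b, c, hb, hc, hbc, by simp, hg⟩
      · rw [Set.ncard_eq_two] at hn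
        obtain ⟨x, y, hxy, rfl⟩ := hn
        obtain ⟨c, hc1, hc2, hg⟩ := hext2 x y hxy
        exact ⟨x, y, c, hxy, hc1, hc2, by simp [Set.insert_subset_iff], hg⟩
      · rw [Set.ncard_eq_three] at hn
        obtain ⟨x, y, z, hxy, hxz, hyz, rfl⟩ := hn
        exact ⟨x, y, z, hxy, hxz, hyz, subset_rfl,
          htri x (by simp) y (by simp) z (by simp) hxy hxz hyz⟩
    have htind : LinearIndependent ℂ ![v a, v b, v c] := (hdet a b c hab hac hbc).2 hgood
    set g : s → Fin 3 := fun x => if (x : Fin 12) = a then 0 else if (x : Fin 12) = b then 1 else 2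
      with hg
    have hcases : ∀ x : s, (x : Fin 12) = a ∨ (x : Fin 12) = b ∨ (x : Fin 12) = c := by
      intro x
      have := hsub x.2
      simpa using this
    have hginj : Function.Injective g := by
      intro x y hxy
      apply Subtype.ext
      rcases hcases x with hx | hx | hx <;> rcases hcases y with hy | hy | hy <;>
        rw [hx, hy] <;> simp [hg, hx, hy, hab, hac, hbc, hab.symm, hac.symm, hbc.symm] at hxy ⊢
    have heq : (fun x : s => v x) = ![v a, v b, v c] ∘ g := by
      funext x
      rcases hcases x with hx | hx | hx <;>
        simp [hg, hx, hab.symm, hac.symm, hbc.symm, Function.comp]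
    rw [heq]
    exact htind.comp g hginj

end char

/-! ### ρ estimates -/

open Classical in
lemma rho_eq (W : Fin 12 → Fin 3 → ℤ) (h : Fin 3 → ℂ) :
    rhoA (LA W) h + (Finset.univ.filter fun i => (∑ t, castW W i t * h t) = 0).card = 12 := by
  classical
  unfold rhoA LA
  have := Finset.card_filter_add_card_filter_not
    (s := (Finset.univ : Finset (Fin 12))) (p := fun i => (∑ t, castW W i t * h t) = 0)
  rw [Finset.card_univ, Fintype.card_fin] at this
  have heq : (Finset.filter (fun i => (lfun (castW W i)) h ≠ 0) Finset.univ)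
      = (Finset.filter (fun a => ¬ (∑ t, castW W a t * h t) = 0) Finset.univ) := by
    apply Finset.filter_congr; intro i _; simp
  rw [heq]
  omega

lemma blockcard : ∀ i : Fin 12,
    (Finset.univ.filter fun x : Fin 12 => (x:ℕ)/4 = (i:ℕ)/4).card = 4 := by decide

lemma pigeon {Z : Finset (Fin 12)} (hZ : 4 ≤ Z.card) :
    ∃ i ∈ Z, ∃ j ∈ Z, i ≠ j ∧ (i:ℕ)/4 = (j:ℕ)/4 := by
  classical
  obtain ⟨i, hi, j, hj, hij, hfij⟩ := Finset.exists_ne_map_eq_of_card_lt_of_maps_to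
    (s := Z) (t := (Finset.univ : Finset (Fin 3)))
    (f := fun i : Fin 12 => (⟨(i:ℕ)/4, by omega⟩ : Fin 3))
    (by rw [Finset.card_univ, Fintype.card_fin]; omega) (fun a _ => Finset.mem_univ _)
  exact ⟨i, hi, j, hj, hij, congrArg Fin.val hfij⟩

lemma pigeon5 {Z : Finset (Fin 12)} (hZ : 5 ≤ Z.card) :
    ∃ i ∈ Z, ∃ j ∈ Z, ∃ k ∈ Z, i ≠ j ∧ i ≠ k ∧ j ≠ k ∧
      (i:ℕ)/4 = (j:ℕ)/4 ∧ (j:ℕ)/4 ≠ (k:ℕ)/4 := by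
  classical
  obtain ⟨i, hi, j, hj, hij, hg⟩ := pigeon (Z := Z) (by omega)
  by_cases hk : ∃ k ∈ Z, (k:ℕ)/4 ≠ (i:ℕ)/4
  · obtain ⟨k, hkZ, hkg⟩ := hk
    have hik : i ≠ k := fun e => hkg (by rw [← e])
    have hjk : j ≠ k := fun e => hkg (by rw [← e]; exact hg.symm)
    exact ⟨i, hi, j, hj, k, hkZ, hij, hik, hjk, hg, fun e => hkg ((hg.trans e).symm)⟩
  · push_neg at hk
    exfalso
    have hsub : Z ⊆ Finset.univ.filter fun x : Fin 12 => (x:ℕ)/4 = (i:ℕ)/4 := by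
      intro x hx
      simp only [Finset.mem_filter, Finset.mem_univ, true_and]
      exact hk x hx
    have := Finset.card_le_card hsub
    rw [blockcard i] at this
    omega

open Classical in
lemma rho_ge8 (W : Fin 12 → Fin 3 → ℤ)
    (hdet : ∀ i j k : Fin 12, i ≠ j → i ≠ k → j ≠ k → (detZ W i j k = 0 ↔ sg i j k))
    (h : Fin 3 → ℂ) (hh : h ≠ 0) : 8 ≤ rhoA (LA W) h := by
  have hre := rho_eq W h
  by_contra hlt
  push_neg at hlt
  have hZ5 : 5 ≤ (Finset.univ.filter fun i => (∑ t, castW W i t * h t) = 0).card := by omega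
  obtain ⟨i, hi, j, hj, k, hk, hij, hik, hjk, hg1, hg2⟩ := pigeon5 hZ5
  have hd : detZ W i j k ≠ 0 := fun e => hg2 ((hdet i j k hij hik hjk).1 e).2
  have hz : ∀ x ∈ (Finset.univ.filter fun i => (∑ t, castW W i t * h t) = 0),
      ∑ t, castW W x t * h t = 0 := fun x hx => (Finset.mem_filter.1 hx).2
  exact hh (mulvec_zero W i j k h hd (hz i hi) (hz j hj) (hz k hk))

open Classical in
lemma rho_ge9 (W : Fin 12 → Fin 3 → ℤ)
    (hpair : ∀ i j : Fin 12, i ≠ j → (i:ℕ)/4 = (j:ℕ)/4 →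
      W i 0 = W j 0 ∧ W i 1 = W j 1 ∧ W i 2 ≠ W j 2)
    (h : Fin 3 → ℂ) (hz : h 2 ≠ 0) : 9 ≤ rhoA (LA W) h := by
  have hre := rho_eq W h
  by_contra hlt
  push_neg at hlt
  have hZ4 : 4 ≤ (Finset.univ.filter fun i => (∑ t, castW W i t * h t) = 0).card := by omega
  obtain ⟨i, hi, j, hj, hij, hg⟩ := pigeon hZ4
  obtain ⟨e0, e1, e2⟩ := hpair i j hij hg
  have hzi := (Finset.mem_filter.1 hi).2
  have hzj := (Finset.mem_filter.1 hj).2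
  rw [Fin.sum_univ_three] at hzi hzj
  unfold castW at hzi hzj
  rw [e0, e1] at hzi
  have hmul : ((W i 2 : ℤ) : ℂ) * h 2 = ((W j 2 : ℤ) : ℂ) * h 2 := by
    linear_combination hzi - hzj
  have := mul_right_cancel₀ hz hmul
  exact e2 (Int.cast_injective this)

open Classical in
lemma rho_single (W : Fin 12 → Fin 3 → ℤ) (c : Fin 3)
    (hc : (Finset.univ.filter fun i => W i c = 0).card = 4) :
    rhoA (LA W) (sing c) = 8 := by
  classical
  have hre := rho_eq W (sing c)
  have heq : (Finset.univ.filter fun i => (∑ t, castW W i t * sing c t) = 0)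
      = (Finset.univ.filter fun i => W i c = 0) := by
    apply Finset.filter_congr
    intro i _
    have : (∑ t, castW W i t * sing c t) = castW W i c := by
      simp [sing, mul_ite]
    rw [this]
    simp [castW, Int.cast_eq_zero]
  rw [heq, hc] at hre
  omega

/-! ### Degree-1 polynomials and directional derivatives -/

noncomputable def linPoly (c : Fin 3 → ℂ) : MvPolynomial (Fin 3) ℂ :=
  C (c 0) * X 0 + C (c 1) * X 1 + C (c 2) * X 2

lemma D_C {d : ℕ} (h : Fin d → ℂ) (a : ℂ) : dirDeriv h (C a) = 0 := by
  simp [dirDeriv, pderiv_C]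

lemma D_lin (h : Fin 3 → ℂ) (c : Fin 3 → ℂ) :
    dirDeriv h (linPoly c) = C (c 0 * h 0 + c 1 * h 1 + c 2 * h 2) := by
  have hd : ∀ i : Fin 3, pderiv i (linPoly c) = C (c i) := by
    intro i
    fin_cases i <;>
      simp [linPoly, pderiv_X, Pi.single_apply]
  simp only [dirDeriv, LinearMap.sum_apply, LinearMap.smul_apply, Derivation.coeFn_coe]
  rw [Fin.sum_univ_three]
  rw [hd 0, hd 1, hd 2]
  rw [smul_eq_C_mul, smul_eq_C_mul, smul_eq_C_mul]
  rw [← C_mul, ← C_mul, ← C_mul, ← C_add, ← C_add]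
  ring_nf

lemma D_pow1 {d : ℕ} (h : Fin d → ℂ) (f : MvPolynomial (Fin d) ℂ) (e : ℕ) (he : 1 ≤ e)
    (hf : dirDeriv h f = 0) : (dirDeriv h ^ e) f = 0 := by
  obtain ⟨n, rfl⟩ : ∃ n, e = n + 1 := ⟨e - 1, by omega⟩
  rw [pow_succ, Module.End.mul_apply, hf, map_zero]

lemma D_pow2 {d : ℕ} (h : Fin d → ℂ) (f : MvPolynomial (Fin d) ℂ) (a : ℂ) (e : ℕ) (he : 2 ≤ e)
    (hf : dirDeriv h f = C a) : (dirDeriv h ^ e) f = 0 := by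
  obtain ⟨n, rfl⟩ : ∃ n, e = n + 2 := ⟨e - 2, by omega⟩
  rw [show n + 2 = (n + 1) + 1 from rfl, pow_succ, Module.End.mul_apply, hf,
    pow_succ, Module.End.mul_apply, D_C, map_zero]

lemma deg_one_classify (m : Fin 3 →₀ ℕ) (hm : m.degree = 1) :
    m = Finsupp.single 0 1 ∨ m = Finsupp.single 1 1 ∨ m = Finsupp.single 2 1 := by
  have hsum : m 0 + m 1 + m 2 = 1 := by
    have h1 : m.degree = ∑ i : Fin 3, m i := by
      rw [Finsupp.degree]
      apply Finset.sum_subset (Finset.subset_univ _)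
      intro x _ hx
      exact Finsupp.notMem_support_iff.1 hx
    rw [h1, Fin.sum_univ_three] at hm
    exact hm
  have hcases : (m 0 = 1 ∧ m 1 = 0 ∧ m 2 = 0) ∨ (m 0 = 0 ∧ m 1 = 1 ∧ m 2 = 0) ∨
      (m 0 = 0 ∧ m 1 = 0 ∧ m 2 = 1) := by omega
  rcases hcases with ⟨h0, h1, h2⟩ | ⟨h0, h1, h2⟩ | ⟨h0, h1, h2⟩
  · left
    ext a
    fin_cases a <;> simp [Finsupp.single_apply, h0, h1, h2]
  · right; left
    ext a
    fin_cases a <;> simp [Finsupp.single_apply, h0, h1, h2]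
  · right; right
    ext a
    fin_cases a <;> simp [Finsupp.single_apply, h0, h1, h2]

lemma homog_structure (f : MvPolynomial (Fin 3) ℂ)
    (hf : f ∈ homogeneousSubmodule (Fin 3) ℂ 1) : ∃ c : Fin 3 → ℂ, f = linPoly c := by
  rw [mem_homogeneousSubmodule] at hf
  refine ⟨fun j => coeff (Finsupp.single j 1) f, ?_⟩
  apply MvPolynomial.ext
  intro m
  by_cases hm : m.degree = 1
  · rcases deg_one_classify m hm with rfl | rfl | rfl <;>
      simp [linPoly, coeff_C_mul, coeff_X', Finsupp.single_left_inj]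
  · rw [hf.coeff_eq_zero hm]
    have : ∀ j : Fin 3, (Finsupp.single j 1 : Fin 3 →₀ ℕ) ≠ m := by
      intro j he
      apply hm
      rw [← he, Finsupp.degree_single]
    simp [linPoly, coeff_C_mul, coeff_X', this]

lemma linPoly_mem : ∀ c, linPoly c ∈ homogeneousSubmodule (Fin 3) ℂ 1 := by
  intro c
  have : ∀ (j : Fin 3) (a : ℂ), C a * X j ∈ homogeneousSubmodule (Fin 3) ℂ 1 := by
    intro j a
    rw [mem_homogeneousSubmodule]
    simpa using (isHomogeneous_X ℂ j).C_mul a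
  exact Submodule.add_mem _ (Submodule.add_mem _ (this 0 _) (this 1 _)) (this 2 _)

/-! ### The inverse systems -/

lemma mem_Cdeg1 (L : Fin 12 → ((Fin 3 → ℂ) →ₗ[ℂ] ℂ)) (k : ℤ) (f : MvPolynomial (Fin 3) ℂ) :
    f ∈ Cdeg1 L k ↔ f ∈ homogeneousSubmodule (Fin 3) ℂ 1 ∧
      ∀ h : Fin 3 → ℂ, h ≠ 0 → (dirDeriv h ^ (((rhoA L h : ℤ) + k + 1).toNat)) f = 0 := by
  simp [Cdeg1, Submodule.mem_inf, Submodule.mem_iInf, LinearMap.mem_ker]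

lemma col1card0 : (Finset.univ.filter fun i => W1 i 0 = 0).card = 4 := by decide
lemma col1card1 : (Finset.univ.filter fun i => W1 i 1 = 0).card = 4 := by decide
lemma col2card0 : (Finset.univ.filter fun i => W2 i 0 = 0).card = 4 := by decide
lemma col2card1 : (Finset.univ.filter fun i => W2 i 1 = 0).card = 4 := by decide
lemma col2card2 : (Finset.univ.filter fun i => W2 i 2 = 0).card = 4 := by decide

lemma sing_apply (c t : Fin 3) : sing c t = if t = c then 1 else 0 := rfl

lemma C1span : Cdeg1 (LA W1) (-8) = Submodule.span ℂ {(X 2 : MvPolynomial (Fin 3) ℂ)} := by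
  ext f
  rw [mem_Cdeg1, Submodule.mem_span_singleton]
  constructor
  · rintro ⟨hhom, hcond⟩
    obtain ⟨c, rfl⟩ := homog_structure f hhom
    have hkey : ∀ t : Fin 3, (Finset.univ.filter fun i => W1 i t = 0).card = 4 → c t = 0 := by
      intro t hcard
      have hs := hcond (sing t) (sing_ne_zero t)
      rw [rho_single W1 t hcard] at hs
      norm_num at hs
      rw [D_lin] at hs
      have hval : c 0 * sing t 0 + c 1 * sing t 1 + c 2 * sing t 2 = c t := by
        fin_cases t <;> simp [sing_apply]
      rw [hval] at hs
      exact (C_eq_zero).1 hs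
    have h0 : c 0 = 0 := hkey 0 col1card0
    have h1 : c 1 = 0 := hkey 1 col1card1
    refine ⟨c 2, ?_⟩
    rw [smul_eq_C_mul]
    simp [linPoly, h0, h1]
  · rintro ⟨a, rfl⟩
    constructor
    · rw [smul_eq_C_mul]
      have : C a * X 2 = linPoly ![0, 0, a] := by simp [linPoly]
      rw [this]
      exact linPoly_mem _
    · intro h hne
      have hlin : (a • (X 2 : MvPolynomial (Fin 3) ℂ)) = linPoly ![0, 0, a] := by
        rw [smul_eq_C_mul]; simp [linPoly]
      have hD : dirDeriv h (a • (X 2 : MvPolynomial (Fin 3) ℂ)) = C (a * h 2) := by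
        rw [hlin, D_lin]; simp
      have hge8 := rho_ge8 W1 hdet1 h hne
      by_cases hz : h 2 = 0
      · apply D_pow1 _ _ _ (by omega)
        rw [hD, hz, mul_zero, map_zero]
      · have hge9 := rho_ge9 W1 hpair1 h hz
        exact D_pow2 _ _ (a * h 2) _ (by omega) hD

lemma C2bot : Cdeg1 (LA W2) (-8) = ⊥ := by
  ext f
  rw [mem_Cdeg1, Submodule.mem_bot]
  constructor
  · rintro ⟨hhom, hcond⟩
    obtain ⟨c, rfl⟩ := homog_structure f hhom
    have hkey : ∀ t : Fin 3, (Finset.univ.filter fun i => W2 i t = 0).card = 4 → c t = 0 := by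
      intro t hcard
      have hs := hcond (sing t) (sing_ne_zero t)
      rw [rho_single W2 t hcard] at hs
      norm_num at hs
      rw [D_lin] at hs
      have hval : c 0 * sing t 0 + c 1 * sing t 1 + c 2 * sing t 2 = c t := by
        fin_cases t <;> simp [sing_apply]
      rw [hval] at hs
      exact (C_eq_zero).1 hs
    have h0 : c 0 = 0 := hkey 0 col2card0
    have h1 : c 1 = 0 := hkey 1 col2card1
    have h2 : c 2 = 0 := hkey 2 col2card2
    simp [linPoly, h0, h1, h2]
  · rintro rfl
    exact ⟨Submodule.zero_mem _, fun h _ => map_zero _⟩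

lemma LA_ne_zero (W : Fin 12 → Fin 3 → ℤ) (hW : ∀ i : Fin 12, W i 0 = 1 ∨ W i 1 = 1) :
    ∀ i, LA W i ≠ 0 := by
  intro i he
  rcases hW i with hc | hc
  · have := LinearMap.congr_fun he (sing 0)
    rw [show LA W i (sing 0) = lfun (castW W i) (sing 0) from rfl, lfun_sing] at this
    simp [castW, hc] at this
  · have := LinearMap.congr_fun he (sing 1)
    rw [show LA W i (sing 1) = lfun (castW W i) (sing 1) from rfl, lfun_sing] at this
    simp [castW, hc] at this

lemma hone1 : ∀ i : Fin 12, W1 i 0 = 1 ∨ W1 i 1 = 1 := by decide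
lemma hone2 : ∀ i : Fin 12, W2 i 0 = 1 ∨ W2 i 1 = 1 := by decide

lemma char_W (W : Fin 12 → Fin 3 → ℤ)
    (hdet : ∀ i j k : Fin 12, i ≠ j → i ≠ k → j ≠ k → (detZ W i j k = 0 ↔ sg i j k))
    (s : Set (Fin 12)) :
    LinearIndependent ℂ (fun i : s => LA W i) ↔
      (s.ncard ≤ 3 ∧ ∀ i ∈ s, ∀ j ∈ s, ∀ k ∈ s, i ≠ j → i ≠ k → j ≠ k → ¬ sg i j k) := by
  have hiff : LinearIndependent ℂ (fun i : s => LA W i)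
      ↔ LinearIndependent ℂ (fun i : s => castW W i) := by
    have : (fun i : s => LA W i) = lfun ∘ (fun i : s => castW W i) := rfl
    rw [this]
    exact lfun.linearIndependent_iff lfun_ker
  rw [hiff]
  apply char
  intro i j k hij hik hjk
  rw [idet]
  exact not_iff_not.mpr (hdet i j k hij hik hjk) |>.symm |> fun t => t.symm


/-- there are two central arrangements in ℂ³ with the same matroid, the
same ρ = 2m (with k = −2m ≤ −6), but whose inverse systems C_{𝒜,−ρ} have degree-1
components of different dimensions (1 versus 0). -/
theorem stmt_8 :
    ∃ (m : ℕ), 3 ≤ m ∧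
    ∃ (L₁ L₂ : Fin (3 * m) → ((Fin 3 → ℂ) →ₗ[ℂ] ℂ)),
      (∀ i, L₁ i ≠ 0) ∧ (∀ i, L₂ i ≠ 0) ∧
      -- same matroid: the same subsets of forms are linearly dependent
      (∀ s : Set (Fin (3 * m)),
        LinearIndependent ℂ (fun i : s => L₁ i) ↔ LinearIndependent ℂ (fun i : s => L₂ i)) ∧
      -- both arrangements have ρ = 2m
      (∀ h : Fin 3 → ℂ, h ≠ 0 → 2 * m ≤ rhoA L₁ h) ∧
      (∃ h : Fin 3 → ℂ, h ≠ 0 ∧ rhoA L₁ h = 2 * m) ∧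
      (∀ h : Fin 3 → ℂ, h ≠ 0 → 2 * m ≤ rhoA L₂ h) ∧
      (∃ h : Fin 3 → ℂ, h ≠ 0 ∧ rhoA L₂ h = 2 * m) ∧
      -- but the degree-1 components of C_{𝒜,−2m} have different dimensions
      Module.finrank ℂ (Cdeg1 L₁ (-(2 * m : ℤ))) = 1 ∧
      Module.finrank ℂ (Cdeg1 L₂ (-(2 * m : ℤ))) = 0 := by
  refine ⟨4, by norm_num, LA W1, LA W2, LA_ne_zero W1 hone1, LA_ne_zero W2 hone2, ?_, ?_, ?_, ?_,
    ?_, ?_, ?_⟩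
  · intro s
    rw [char_W W1 hdet1 s, char_W W2 hdet2 s]
  · intro h hne
    exact rho_ge8 W1 hdet1 h hne
  · exact ⟨sing 0, sing_ne_zero 0, rho_single W1 0 col1card0⟩
  · intro h hne
    exact rho_ge8 W2 hdet2 h hne
  · exact ⟨sing 0, sing_ne_zero 0, rho_single W2 0 col2card0⟩
  · rw [show (-(2 * (4:ℕ) : ℤ)) = -8 by norm_num, C1span]
    exact finrank_span_singleton (X_ne_zero 2)
  · rw [show (-(2 * (4:ℕ) : ℤ)) = -8 by norm_num, C2bot]
    exact finrank_bot ℂ _
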